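/- The map t : B⋊·H → H defined by t(b⊗h) = d(b)h is a Hopf algebra map from the biproduct to H: t((a⊗h)(b⊗g)) = t(a⊗h)·t(b⊗g) for all a,b ∈ B and h,g ∈ H, t(1⊗1) = 1, Δ_H(t(x)) = (t⊗t)(Δ(x)) for all x ∈ B⋊·H, and ε(t(x)) = ε(x). (Proposition 3.5.) -/

import Mathlib

open TensorProduct

noncomputable section

variable (k H B : Type*) [Field k] [Ring H] [HopfAlgebra k H]
  [Ring B] [Algebra k B] [Coalgebra k B]

/-- `t(b⊗h) = d(b)h`. -/
def tmap (d : B →ₗ[k] H) : B ⊗[k] H →ₗ[k] H :=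
  LinearMap.mul' k H ∘ₗ map d LinearMap.id

/-- The smash product multiplication `(a⊗h)(b⊗g) = a(h₁▷b) ⊗ h₂g` on `B ⊗ H`. -/
def smashMul (act : H ⊗[k] B →ₗ[k] B) :
    (B ⊗[k] H) ⊗[k] (B ⊗[k] H) →ₗ[k] B ⊗[k] H :=
  map (LinearMap.mul' k B) LinearMap.id
  ∘ₗ (TensorProduct.assoc k B B H).symm.toLinearMap
  ∘ₗ map LinearMap.id
      (map act (LinearMap.mul' k H)
        ∘ₗ (tensorTensorTensorComm k H H B H).toLinearMap)
  ∘ₗ (TensorProduct.assoc k B (H ⊗[k] H) (B ⊗[k] H)).toLinearMap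
  ∘ₗ map (map LinearMap.id (Coalgebra.comul : H →ₗ[k] H ⊗[k] H)) LinearMap.id

/-- The smash (biproduct) coproduct
`Δ(b⊗h) = (b₁ ⊗ (b₂)⁽¹⁾h₁) ⊗ ((b₂)⁽²⁾ ⊗ h₂)` on `B⋊·H`. -/
def comulBP (δ : B →ₗ[k] H ⊗[k] B) :
    B ⊗[k] H →ₗ[k] (B ⊗[k] H) ⊗[k] (B ⊗[k] H) :=
  map (map LinearMap.id (LinearMap.mul' k H) ∘ₗ (TensorProduct.assoc k B H H).toLinearMap)
      LinearMap.id
  ∘ₗ (tensorTensorTensorComm k (B ⊗[k] H) B H H).toLinearMap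
  ∘ₗ map ((TensorProduct.assoc k B H B).symm.toLinearMap ∘ₗ map LinearMap.id δ)
      (Coalgebra.comul : H →ₗ[k] H ⊗[k] H)
  ∘ₗ map (Coalgebra.comul : B →ₗ[k] B ⊗[k] B) LinearMap.id

/-- The biproduct counit `ε(b⊗h) = ε(b)ε(h)`. -/
def counitBP : B ⊗[k] H →ₗ[k] k :=
  (TensorProduct.lid k k).toLinearMap
    ∘ₗ map (Coalgebra.counit : B →ₗ[k] k) (Coalgebra.counit : H →ₗ[k] k)

set_option maxHeartbeats 1000000 in
set_option synthInstance.maxHeartbeats 400000 in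
set_option linter.unusedSectionVars false in
open Coalgebra HopfAlgebra in
/-- Key identity: `∑ d(h₁ ▷ b) h₂ = h d(b)`. -/
lemma key1 (act : H ⊗[k] B →ₗ[k] B) (d : B →ₗ[k] H)
    (hd_act : d ∘ₗ act = LinearMap.mul' k H
      ∘ₗ map LinearMap.id (LinearMap.mul' k H
            ∘ₗ map LinearMap.id (HopfAlgebra.antipode (R := k) : H →ₗ[k] H)
            ∘ₗ (TensorProduct.comm k H H).toLinearMap)
      ∘ₗ (TensorProduct.assoc k H H H).toLinearMap
      ∘ₗ map (Coalgebra.comul : H →ₗ[k] H ⊗[k] H) d)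
    (b : B) (h : H) (r : Coalgebra.Repr k h (H × H)) :
    ∑ i ∈ r.index, d (act (r.left i ⊗ₜ[k] b)) * r.right i = h * d b := by
  set c := d b with hc
  set S : H →ₗ[k] H := HopfAlgebra.antipode (R := k) with hS
  set inner : H ⊗[k] H →ₗ[k] H :=
    LinearMap.mul' k H ∘ₗ map LinearMap.id ((LinearMap.mulLeft k c) ∘ₗ S) with hinner
  set T : (H ⊗[k] H) ⊗[k] H →ₗ[k] H := LinearMap.mul' k H ∘ₗ map inner LinearMap.id with hT
  have hinner_apply : ∀ x y : H, inner (x ⊗ₜ[k] y) = x * (c * S y) := by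
    intro x y; simp [hinner]
  have hT_apply : ∀ (X : H ⊗[k] H) (z : H), T (X ⊗ₜ[k] z) = inner X * z := by
    intro X z
    induction X using TensorProduct.induction_on with
    | zero => simp [hT]
    | tmul x y => simp [hT]
    | add u v hu hv => simp only [add_tmul, map_add, hu, hv, add_mul]
  -- step A : d(act(x ⊗ b)) * z = T (comul x ⊗ z)
  have stepA : ∀ (x z : H), d (act (x ⊗ₜ[k] b)) * z = T (comul x ⊗ₜ[k] z) := by
    intro x z
    have h1 : d (act (x ⊗ₜ[k] b)) =
        (LinearMap.mul' k H
          ∘ₗ map LinearMap.id (LinearMap.mul' k H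
                ∘ₗ map LinearMap.id S
                ∘ₗ (TensorProduct.comm k H H).toLinearMap)
          ∘ₗ (TensorProduct.assoc k H H H).toLinearMap
          ∘ₗ map (Coalgebra.comul : H →ₗ[k] H ⊗[k] H) d) (x ⊗ₜ[k] b) :=
      LinearMap.congr_fun hd_act (x ⊗ₜ[k] b)
    rw [h1]
    simp only [LinearMap.comp_apply, map_tmul, LinearMap.id_coe, id_eq, ← hc]
    rw [hT_apply]
    induction (comul (R := k) x) using TensorProduct.induction_on with
    | zero => simp
    | tmul u v => simp [hinner, mul_assoc]
    | add X Y hX hY => simp only [add_tmul, map_add, hX, hY, add_mul]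
  have lhs_eq : ∑ i ∈ r.index, d (act (r.left i ⊗ₜ[k] b)) * r.right i
      = T ((Coalgebra.comul (R := k)).rTensor H (comul h)) := by
    rw [← r.eq, map_sum, map_sum]
    refine Finset.sum_congr rfl fun i _ => ?_
    rw [LinearMap.rTensor_tmul, stepA]
  rw [lhs_eq]
  have coas : (Coalgebra.comul (R := k)).rTensor H (comul h)
      = (TensorProduct.assoc k H H H).symm ((Coalgebra.comul (R := k)).lTensor H (comul h)) := by
    rw [Coalgebra.coassoc_symm_apply]
  rw [coas, ← r.eq, map_sum, map_sum, map_sum]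
  -- step B : T (assoc⁻¹ (x ⊗ Z)) = x * (c * mul' (rTensor S Z))
  have stepB : ∀ (x : H) (Z : H ⊗[k] H),
      T ((TensorProduct.assoc k H H H).symm (x ⊗ₜ[k] Z))
        = x * (c * LinearMap.mul' k H (S.rTensor H Z)) := by
    intro x Z
    induction Z using TensorProduct.induction_on with
    | zero => simp
    | tmul y z =>
        simp only [assoc_symm_tmul, hT_apply, hinner_apply, LinearMap.rTensor_tmul,
          LinearMap.mul'_apply]
        simp [mul_assoc]
    | add Z₁ Z₂ h1 h2 =>
        simp only [tmul_add, map_add, h1, h2, mul_add]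
  calc ∑ i ∈ r.index, T ((TensorProduct.assoc k H H H).symm
          ((Coalgebra.comul (R := k)).lTensor H (r.left i ⊗ₜ[k] r.right i)))
      = ∑ i ∈ r.index, r.left i * (c * algebraMap k H (Coalgebra.counit (r.right i))) := by
        refine Finset.sum_congr rfl fun i _ => ?_
        rw [LinearMap.lTensor_tmul, stepB, HopfAlgebra.mul_antipode_rTensor_comul_apply]
    _ = (∑ i ∈ r.index, Coalgebra.counit (R := k) (r.right i) • r.left i) * c := by
        rw [Finset.sum_mul]
        refine Finset.sum_congr rfl fun i _ => ?_
        rw [Algebra.smul_def, mul_assoc, Algebra.commutes, ← mul_assoc]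
    _ = h * c := by
        congr 1
        have h2 := congrArg (TensorProduct.rid k H) (Coalgebra.sum_tmul_counit_eq (R := k) r)
        simp only [map_sum, TensorProduct.rid_tmul, one_smul] at h2
        exact h2


set_option maxHeartbeats 1000000 in
set_option synthInstance.maxHeartbeats 400000 in
set_option linter.unusedSectionVars false in
lemma aux3 (δ : B →ₗ[k] H ⊗[k] B) (d : B →ₗ[k] H) (X : B ⊗[k] B) (Y : H ⊗[k] H) :
    (map (LinearMap.mul' k H) LinearMap.id)
        ((TensorProduct.assoc k H H H).symm
          ((map d (map LinearMap.id d ∘ₗ δ)) X)) * Y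
    = map (tmap k H B d) (tmap k H B d)
        ((map (map LinearMap.id (LinearMap.mul' k H) ∘ₗ (TensorProduct.assoc k B H H).toLinearMap)
            LinearMap.id)
          ((tensorTensorTensorComm k (B ⊗[k] H) B H H)
            (((TensorProduct.assoc k B H B).symm ((map LinearMap.id δ) X)) ⊗ₜ[k] Y))) := by
  induction X using TensorProduct.induction_on with
  | zero => simp
  | add X₁ X₂ h1 h2 => simp only [map_add, add_tmul, add_mul, h1, h2]
  | tmul x y =>
    induction Y using TensorProduct.induction_on with
    | zero => simp
    | add Y₁ Y₂ h1 h2 => simp only [map_add, tmul_add, mul_add, h1, h2]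
    | tmul u v =>
      simp only [map_tmul, LinearMap.comp_apply, LinearMap.id_coe, id_eq]
      induction (δ y) using TensorProduct.induction_on with
      | zero => simp
      | add W₁ W₂ h1 h2 =>
          simp only [map_add, add_tmul, tmul_add, add_mul, h1, h2, map_add]
      | tmul p q =>
          simp only [map_tmul, assoc_symm_tmul, tensorTensorTensorComm_tmul,
            LinearMap.comp_apply, LinearEquiv.coe_coe, assoc_tmul, map_tmul,
            LinearMap.id_coe, id_eq, LinearMap.mul'_apply, tmap,
            Algebra.TensorProduct.tmul_mul_tmul]
          rw [mul_assoc]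


set_option maxHeartbeats 1000000
set_option synthInstance.maxHeartbeats 400000

/-- Proposition 3.5: `t(b⊗h) = d(b)h` is a Hopf algebra map from the biproduct `B⋊·H`
to `H`: it is multiplicative, unital, comultiplicative and counital. -/
theorem statement5 (act : H ⊗[k] B →ₗ[k] B) (δ : B →ₗ[k] H ⊗[k] B) (d : B →ₗ[k] H)
    -- `(hg)▷b = h▷(g▷b)`
    (hact_mul : ∀ (h g : H) (b : B), act ((h * g) ⊗ₜ[k] b) = act (h ⊗ₜ[k] act (g ⊗ₜ[k] b)))
    -- `1▷b = b`
    (hact_one : ∀ b : B, act ((1 : H) ⊗ₜ[k] b) = b)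
    -- module algebra: `h▷(ab) = (h₁▷a)(h₂▷b)`
    (hact_mul_alg : act ∘ₗ map LinearMap.id (LinearMap.mul' k B)
      = LinearMap.mul' k B ∘ₗ map act act
          ∘ₗ (tensorTensorTensorComm k H H B B).toLinearMap
          ∘ₗ map (Coalgebra.comul : H →ₗ[k] H ⊗[k] H) LinearMap.id)
    -- module algebra: `h▷1 = ε(h)1`
    (hact_unit : ∀ h : H, act (h ⊗ₜ[k] (1 : B)) = (Coalgebra.counit h : k) • (1 : B))
    -- `δ` is a coassociative left coaction
    (hδ_coassoc : (TensorProduct.assoc k H H B).toLinearMap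
        ∘ₗ map (Coalgebra.comul : H →ₗ[k] H ⊗[k] H) LinearMap.id ∘ₗ δ
      = map LinearMap.id δ ∘ₗ δ)
    -- `δ` is counital
    (hδ_counit : (TensorProduct.lid k B).toLinearMap
        ∘ₗ map (Coalgebra.counit : H →ₗ[k] k) LinearMap.id ∘ₗ δ = LinearMap.id)
    -- `d` is an algebra map
    (hd_mul : ∀ a b : B, d (a * b) = d a * d b)
    (hd_one : d 1 = 1)
    -- twisted Hopf-map condition: `Δ_H(d(b)) = d(b₁)(b₂)⁽¹⁾ ⊗ d((b₂)⁽²⁾)`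
    (hd_comul : (Coalgebra.comul : H →ₗ[k] H ⊗[k] H) ∘ₗ d
      = map (LinearMap.mul' k H) LinearMap.id
          ∘ₗ (TensorProduct.assoc k H H H).symm.toLinearMap
          ∘ₗ map d (map LinearMap.id d ∘ₗ δ)
          ∘ₗ (Coalgebra.comul : B →ₗ[k] B ⊗[k] B))
    -- twisted Hopf-map condition: `ε(d(b)) = ε(b)`
    (hd_counit : (Coalgebra.counit : H →ₗ[k] k) ∘ₗ d = (Coalgebra.counit : B →ₗ[k] k))
    -- `d(h▷b) = h₁ d(b) S(h₂)`
    (hd_act : d ∘ₗ act = LinearMap.mul' k H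
      ∘ₗ map LinearMap.id (LinearMap.mul' k H
            ∘ₗ map LinearMap.id (HopfAlgebra.antipode (R := k) : H →ₗ[k] H)
            ∘ₗ (TensorProduct.comm k H H).toLinearMap)
      ∘ₗ (TensorProduct.assoc k H H H).toLinearMap
      ∘ₗ map (Coalgebra.comul : H →ₗ[k] H ⊗[k] H) d) :
    (∀ (a b : B) (h g : H),
      tmap k H B d (smashMul k H B act ((a ⊗ₜ[k] h) ⊗ₜ[k] (b ⊗ₜ[k] g)))
        = tmap k H B d (a ⊗ₜ[k] h) * tmap k H B d (b ⊗ₜ[k] g))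
    ∧ tmap k H B d ((1 : B) ⊗ₜ[k] (1 : H)) = 1
    ∧ (Coalgebra.comul : H →ₗ[k] H ⊗[k] H) ∘ₗ tmap k H B d
        = map (tmap k H B d) (tmap k H B d) ∘ₗ comulBP k H B δ
    ∧ (Coalgebra.counit : H →ₗ[k] k) ∘ₗ tmap k H B d = counitBP k H B := by

  refine ⟨?_, ?_, ?_, ?_⟩
  · -- multiplicativity
    intro a b h g
    set r : Coalgebra.Repr k h (H × H) := Coalgebra.Repr.arbitrary k h with hr
    have hcom : (Coalgebra.comul (R := k) h : H ⊗[k] H)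
        = ∑ i ∈ r.index, r.left i ⊗ₜ[k] r.right i := r.eq.symm
    have expand : smashMul k H B act ((a ⊗ₜ[k] h) ⊗ₜ[k] (b ⊗ₜ[k] g))
        = ∑ i ∈ r.index, (a * act (r.left i ⊗ₜ[k] b)) ⊗ₜ[k] (r.right i * g) := by
      simp only [smashMul, LinearMap.comp_apply, LinearEquiv.coe_coe, map_tmul,
        LinearMap.id_coe, id_eq, hcom, sum_tmul, map_sum, tmul_sum]
      refine Finset.sum_congr rfl fun i _ => ?_
      simp [tensorTensorTensorComm_tmul]
    rw [expand, map_sum]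
    have hterm : ∀ i, tmap k H B d ((a * act (r.left i ⊗ₜ[k] b)) ⊗ₜ[k] (r.right i * g))
        = d a * ((d (act (r.left i ⊗ₜ[k] b)) * r.right i) * g) := by
      intro i
      simp only [tmap, LinearMap.comp_apply, map_tmul, LinearMap.id_coe, id_eq,
        LinearMap.mul'_apply, hd_mul]
      simp [mul_assoc]
    simp only [hterm]
    rw [← Finset.mul_sum, ← Finset.sum_mul, key1 k H B act d hd_act b h r]
    simp [tmap, mul_assoc]
  · -- unitality
    simp [tmap, hd_one]
  · -- comultiplicativity
    apply TensorProduct.ext'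
    intro b h
    simp only [LinearMap.comp_apply, tmap, map_tmul, LinearMap.id_coe, id_eq,
      LinearMap.mul'_apply]
    rw [Bialgebra.comul_mul]
    have hdb := LinearMap.congr_fun hd_comul b
    simp only [LinearMap.comp_apply, LinearEquiv.coe_coe] at hdb
    rw [hdb]
    rw [aux3 k H B δ d (Coalgebra.comul b) (Coalgebra.comul h)]
    simp only [comulBP, tmap, LinearMap.comp_apply, map_tmul, LinearMap.id_coe, id_eq,
      LinearEquiv.coe_coe]
  · -- counitality
    apply TensorProduct.ext'
    intro b h
    have hdc := LinearMap.congr_fun hd_counit b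
    simp only [LinearMap.comp_apply] at hdc
    simp only [LinearMap.comp_apply, tmap, counitBP, map_tmul, LinearMap.id_coe, id_eq,
      LinearMap.mul'_apply, LinearEquiv.coe_coe, lid_tmul, Bialgebra.counit_mul, hdc,
      smul_eq_mul]

end
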